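/- arXiv:2103.15789 — 3 statements merged into one kernel-verified Lean document; each statement's English description precedes it below -/
import Mathlib

section
/- Let a, b, c ∈ ℝ, A = [[a,c],[b,a]], and write M(t) = exp(tA) with entries m_{ij}(t). Then for all t ∈ ℝ: (i) m₂₂(t) = m₁₁(t) and b·m₁₂(t) = c·m₂₁(t); (ii) det M(t) = e^{2at}; (iii) m₁₁(−t) = m₂₂(−t) = e^{−2at}·m₁₁(t), m₂₁(−t) = −e^{−2at}·m₂₁(t), and m₁₂(−t) = −e^{−2at}·m₁₂(t). -/
/-- `Mexp A t = exp (t A)`, the matrix exponential. -/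
noncomputable def Mexp (A : Matrix (Fin 2) (Fin 2) ℝ) (t : ℝ) : Matrix (Fin 2) (Fin 2) ℝ :=
  NormedSpace.exp (t • A)

open NormedSpace

private lemma powA_entries (a b c : ℝ) (n : ℕ) :
    (!![a, c; b, a] ^ n) 1 1 = (!![a, c; b, a] ^ n) 0 0 ∧
    b * (!![a, c; b, a] ^ n) 0 1 = c * (!![a, c; b, a] ^ n) 1 0 := by
  have e00 : !![a, c; b, a] 0 0 = a := by norm_num
  have e01 : !![a, c; b, a] 0 1 = c := by norm_num
  have e10 : !![a, c; b, a] 1 0 = b := by norm_num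
  have e11 : !![a, c; b, a] 1 1 = a := by norm_num
  induction n with
  | zero => simp [Matrix.one_apply]
  | succ n ih =>
    obtain ⟨h1, h2⟩ := ih
    constructor
    · rw [pow_succ]
      simp only [Matrix.mul_apply, Fin.sum_univ_two, e00, e01, e10, e11]
      linear_combination a * h1 - h2
    · rw [pow_succ]
      simp only [Matrix.mul_apply, Fin.sum_univ_two, e00, e01, e10, e11]
      linear_combination a * h2 - b * c * h1

private lemma Mexp_apply_eq (A : Matrix (Fin 2) (Fin 2) ℝ) (t : ℝ) (i j : Fin 2) :
    Mexp A t i j = ∑' n : ℕ, ((n.factorial : ℝ)⁻¹ * (t ^ n * (A ^ n) i j)) := by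
  letI : SeminormedRing (Matrix (Fin 2) (Fin 2) ℝ) := Matrix.linftyOpSemiNormedRing
  letI : NormedRing (Matrix (Fin 2) (Fin 2) ℝ) := Matrix.linftyOpNormedRing
  letI : NormedAlgebra ℝ (Matrix (Fin 2) (Fin 2) ℝ) := Matrix.linftyOpNormedAlgebra
  have hs : Summable fun n : ℕ => ((n.factorial)⁻¹ : ℝ) • (t • A) ^ n :=
    NormedSpace.expSeries_summable' (𝕂 := ℝ) (t • A)
  have hmap := hs.hasSum.map
      (AddMonoidHom.mk' (fun M : Matrix (Fin 2) (Fin 2) ℝ => M i j) (fun _ _ => rfl))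
      (continuous_id.matrix_elem i j)
  have key : Mexp A t i j = ∑' n : ℕ, (((n.factorial : ℝ)⁻¹ • (t • A) ^ n) i j) :=
    (congrArg (fun M : Matrix (Fin 2) (Fin 2) ℝ => M i j)
      (congrFun (NormedSpace.exp_eq_tsum ℝ) (t • A))).trans hmap.tsum_eq.symm
  refine key.trans (tsum_congr fun n => ?_)
  rw [smul_pow]
  simp [Matrix.smul_apply, mul_assoc]

private lemma JAJ (a b c s : ℝ) :
    !![(1:ℝ), 0; 0, -1] * (s • !![a, c; b, a]) * !![(1:ℝ), 0; 0, -1] =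
      (2 * a * s) • (1 : Matrix (Fin 2) (Fin 2) ℝ) + (-s) • !![a, c; b, a] := by
  ext i j
  fin_cases i <;> fin_cases j <;>
    simp [Matrix.mul_apply, Fin.sum_univ_two, Matrix.one_apply] <;> ring

private lemma exp_scalar (r : ℝ) :
    NormedSpace.exp (r • (1 : Matrix (Fin 2) (Fin 2) ℝ)) = Real.exp r • 1 := by
  have h : r • (1 : Matrix (Fin 2) (Fin 2) ℝ) = Matrix.diagonal (fun _ => r) := by
    ext i j; fin_cases i <;> fin_cases j <;> simp [Matrix.one_apply]
  rw [h, Matrix.exp_diagonal]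
  ext i j
  fin_cases i <;> fin_cases j <;>
    simp [Matrix.one_apply, ← Real.exp_eq_exp_ℝ]

private lemma JMJ (M : Matrix (Fin 2) (Fin 2) ℝ) :
    !![(1:ℝ), 0; 0, -1] * M * !![(1:ℝ), 0; 0, -1] =
      !![M 0 0, -(M 0 1); -(M 1 0), M 1 1] := by
  ext i j
  fin_cases i <;> fin_cases j <;>
    simp [Matrix.mul_apply, Matrix.vecMul, dotProduct, Fin.sum_univ_two] <;> ring

private lemma Mexp_neg (a b c s : ℝ) :
    Mexp !![a, c; b, a] (-s) =
      (Real.exp (2 * a * s))⁻¹ •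
        (!![(1:ℝ), 0; 0, -1] * Mexp !![a, c; b, a] s * !![(1:ℝ), 0; 0, -1]) := by
  have hJJ : !![(1:ℝ), 0; 0, -1] * !![(1:ℝ), 0; 0, -1] = 1 := by
    rw [Matrix.one_fin_two]; norm_num [Matrix.mul_fin_two]
  have hJinv : (!![(1:ℝ), 0; 0, -1])⁻¹ = !![(1:ℝ), 0; 0, -1] := Matrix.inv_eq_right_inv hJJ
  have hconj := Matrix.exp_conj !![(1:ℝ), 0; 0, -1] (s • !![a, c; b, a])
    ⟨⟨_, _, hJJ, hJJ⟩, rfl⟩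
  rw [hJinv, JAJ a b c s] at hconj
  have hcomm : Commute ((2 * a * s) • (1 : Matrix (Fin 2) (Fin 2) ℝ))
      ((-s) • !![a, c; b, a]) :=
    ((Commute.one_left _).smul_left _).smul_right _
  rw [Matrix.exp_add_of_commute _ _ hcomm, exp_scalar] at hconj
  have : Real.exp (2 * a * s) • Mexp !![a, c; b, a] (-s) =
      !![(1:ℝ), 0; 0, -1] * Mexp !![a, c; b, a] s * !![(1:ℝ), 0; 0, -1] := by
    simp only [Mexp]; rw [← hconj, smul_mul_assoc, one_mul]
  rw [← this, smul_smul, inv_mul_cancel₀ (Real.exp_ne_zero _), one_smul]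

/-- Entry identities for `M(t) = exp(tA)` with `A = [[a,c],[b,a]]`:
(i) `m₂₂(t) = m₁₁(t)` and `b m₁₂(t) = c m₂₁(t)`; (ii) `det M(t) = e^{2at}`;
(iii) `m₁₁(−t) = m₂₂(−t) = e^{−2at} m₁₁(t)`, `m₂₁(−t) = −e^{−2at} m₂₁(t)`,
`m₁₂(−t) = −e^{−2at} m₁₂(t)`. -/
theorem Mexp_entries (a b c : ℝ) :
    ∀ t : ℝ,
      Mexp !![a, c; b, a] t 1 1 = Mexp !![a, c; b, a] t 0 0 ∧
      b * Mexp !![a, c; b, a] t 0 1 = c * Mexp !![a, c; b, a] t 1 0 ∧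
      (Mexp !![a, c; b, a] t).det = Real.exp (2 * a * t) ∧
      Mexp !![a, c; b, a] (-t) 0 0 = Real.exp (-2 * a * t) * Mexp !![a, c; b, a] t 0 0 ∧
      Mexp !![a, c; b, a] (-t) 1 1 = Real.exp (-2 * a * t) * Mexp !![a, c; b, a] t 0 0 ∧
      Mexp !![a, c; b, a] (-t) 1 0 = -(Real.exp (-2 * a * t) * Mexp !![a, c; b, a] t 1 0) ∧
      Mexp !![a, c; b, a] (-t) 0 1 = -(Real.exp (-2 * a * t) * Mexp !![a, c; b, a] t 0 1) := by
  intro t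
  have hE : Real.exp (-2 * a * t) = (Real.exp (2 * a * t))⁻¹ := by
    rw [← Real.exp_neg]; ring_nf
  have hsym : ∀ s : ℝ, Mexp !![a, c; b, a] s 1 1 = Mexp !![a, c; b, a] s 0 0 := fun s => by
    rw [Mexp_apply_eq, Mexp_apply_eq]
    exact tsum_congr fun n => by rw [(powA_entries a b c n).1]
  have hbc : b * Mexp !![a, c; b, a] t 0 1 = c * Mexp !![a, c; b, a] t 1 0 := by
    rw [Mexp_apply_eq, Mexp_apply_eq, ← tsum_mul_left, ← tsum_mul_left]
    exact tsum_congr fun n => by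
      linear_combination (n.factorial : ℝ)⁻¹ * t ^ n * (powA_entries a b c n).2
  have hneg := Mexp_neg a b c t
  have h00 : Mexp !![a, c; b, a] (-t) 0 0 =
      Real.exp (-2 * a * t) * Mexp !![a, c; b, a] t 0 0 := by
    rw [hneg, hE, JMJ]
    simp [Matrix.smul_apply]
  have h11 : Mexp !![a, c; b, a] (-t) 1 1 =
      Real.exp (-2 * a * t) * Mexp !![a, c; b, a] t 1 1 := by
    rw [hneg, hE, JMJ]
    simp [Matrix.smul_apply]
  have h10 : Mexp !![a, c; b, a] (-t) 1 0 =
      -(Real.exp (-2 * a * t) * Mexp !![a, c; b, a] t 1 0) := by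
    rw [hneg, hE, JMJ]
    simp [Matrix.smul_apply]
  have h01 : Mexp !![a, c; b, a] (-t) 0 1 =
      -(Real.exp (-2 * a * t) * Mexp !![a, c; b, a] t 0 1) := by
    rw [hneg, hE, JMJ]
    simp [Matrix.smul_apply]
  have hinv : Mexp !![a, c; b, a] t * Mexp !![a, c; b, a] (-t) = 1 := by
    rw [Mexp, Mexp, ← Matrix.exp_add_of_commute _ _
      (((Commute.refl _).smul_left t).smul_right (-t))]
    rw [show t • !![a, c; b, a] + (-t) • !![a, c; b, a] = 0 by rw [neg_smul]; abel]
    exact NormedSpace.exp_zero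
  have hdet : (Mexp !![a, c; b, a] t).det = Real.exp (2 * a * t) := by
    have h1 : (Mexp !![a, c; b, a] t * Mexp !![a, c; b, a] (-t)) 0 0 = 1 := by
      rw [hinv]; simp [Matrix.one_apply]
    rw [Matrix.mul_apply, Fin.sum_univ_two, h00, h10] at h1
    rw [Matrix.det_fin_two, hsym t]
    have hXE : Real.exp (-2 * a * t) * Real.exp (2 * a * t) = 1 := by
      rw [← Real.exp_add]; ring_nf; exact Real.exp_zero
    linear_combination Real.exp (2 * a * t) * h1 -
      (Mexp !![a, c; b, a] t 0 0 * Mexp !![a, c; b, a] t 0 0 -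
        Mexp !![a, c; b, a] t 0 1 * Mexp !![a, c; b, a] t 1 0) * hXE
  exact ⟨hsym t, hbc, hdet, h00, (h11.trans (by rw [hsym t])), h10, h01⟩
end

section
/- For i = 1, 2, let a_i > 0, b_i > 0, c_i ∈ ℝ and A_i = [[a_i,c_i],[b_i,a_i]]. Then there exists a Lie algebra isomorphism between 𝔤(A₁) and 𝔤(A₂) if and only if b₁c₁/a₁² = b₂c₂/a₂². -/
attribute [local instance 100] LieRing.ofAssociativeRing

def Lmat (A : Matrix (Fin 2) (Fin 2) ℝ) (x₁ x₂ x₃ : ℝ) : Matrix (Fin 3) (Fin 3) ℝ :=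
  !![x₁ * A 0 0, x₁ * A 0 1, x₂;
     x₁ * A 1 0, x₁ * A 1 1, x₃;
     0,          0,          0]

/-- The Lie subalgebra `𝔤(A) = { L(x) : x ∈ ℝ³ }` of the 3×3 real matrices with the
commutator bracket. -/
def gA (A : Matrix (Fin 2) (Fin 2) ℝ) : LieSubalgebra ℝ (Matrix (Fin 3) (Fin 3) ℝ) where
  carrier := { M | ∃ x₁ x₂ x₃ : ℝ, M = Lmat A x₁ x₂ x₃ }
  add_mem' := by
    rintro M N ⟨x₁, x₂, x₃, rfl⟩ ⟨y₁, y₂, y₃, rfl⟩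
    refine ⟨x₁ + y₁, x₂ + y₂, x₃ + y₃, ?_⟩
    ext i j
    fin_cases i <;> fin_cases j <;>
      simp [Lmat, Matrix.vecHead, Matrix.vecTail] <;> ring
  zero_mem' := by
    refine ⟨0, 0, 0, ?_⟩
    ext i j
    fin_cases i <;> fin_cases j <;>
      simp [Lmat, Matrix.vecHead, Matrix.vecTail]
  smul_mem' := by
    rintro r M ⟨x₁, x₂, x₃, rfl⟩
    refine ⟨r * x₁, r * x₂, r * x₃, ?_⟩
    ext i j
    fin_cases i <;> fin_cases j <;>
      simp [Lmat, Matrix.vecHead, Matrix.vecTail] <;> ring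
  lie_mem' := by
    rintro M N ⟨x₁, x₂, x₃, rfl⟩ ⟨y₁, y₂, y₃, rfl⟩
    refine ⟨0, A 0 0 * (x₁ * y₂ - y₁ * x₂) + A 0 1 * (x₁ * y₃ - y₁ * x₃),
      A 1 0 * (x₁ * y₂ - y₁ * x₂) + A 1 1 * (x₁ * y₃ - y₁ * x₃), ?_⟩
    show Lmat A x₁ x₂ x₃ * Lmat A y₁ y₂ y₃ - Lmat A y₁ y₂ y₃ * Lmat A x₁ x₂ x₃ = _
    rw [Lmat, Lmat, Lmat, Matrix.mul_fin_three, Matrix.mul_fin_three]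
    ext i j
    fin_cases i <;> fin_cases j <;>
      simp [Matrix.vecHead, Matrix.vecTail] <;> ring

namespace GAaux
variable (A : Matrix (Fin 2) (Fin 2) ℝ)

lemma mem_gA (M : Matrix (Fin 3) (Fin 3) ℝ) :
    M ∈ gA A ↔ ∃ x₁ x₂ x₃ : ℝ, M = Lmat A x₁ x₂ x₃ := Iff.rfl

/-- element of `gA A` from coordinates -/
def Lmem (x : Fin 3 → ℝ) : gA A := ⟨Lmat A (x 0) (x 1) (x 2), ⟨x 0, x 1, x 2, rfl⟩⟩

@[simp] lemma Lmem_coe (x : Fin 3 → ℝ) : (Lmem A x : Matrix (Fin 3) (Fin 3) ℝ) = Lmat A (x 0) (x 1) (x 2) := rfl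

lemma Lmat_entries (x₁ x₂ x₃ : ℝ) :
    Lmat A x₁ x₂ x₃ 1 0 = x₁ * A 1 0 ∧ Lmat A x₁ x₂ x₃ 0 2 = x₂ ∧ Lmat A x₁ x₂ x₃ 1 2 = x₃ := by
  refine ⟨?_, ?_, ?_⟩ <;> simp [Lmat]

/-- coordinates from a matrix (assuming `A 1 0 ≠ 0`) -/
noncomputable def coordFun (M : Matrix (Fin 3) (Fin 3) ℝ) : Fin 3 → ℝ :=
  ![M 1 0 / A 1 0, M 0 2, M 1 2]

lemma coord_Lmat (hA : A 1 0 ≠ 0) (x₁ x₂ x₃ : ℝ) :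
    coordFun A (Lmat A x₁ x₂ x₃) = ![x₁, x₂, x₃] := by
  funext i
  fin_cases i <;> simp [coordFun, Lmat]
  field_simp

noncomputable def gAEquiv (hA : A 1 0 ≠ 0) : ↥(gA A) ≃ₗ[ℝ] (Fin 3 → ℝ) where
  toFun M := coordFun A M.1
  invFun := Lmem A
  left_inv := by
    rintro ⟨M, x₁, x₂, x₃, rfl⟩
    apply Subtype.ext
    simp [coord_Lmat A hA]
  right_inv := by
    intro x
    simp [coord_Lmat A hA]
    funext i; fin_cases i <;> rfl
  map_add' := by
    rintro ⟨M, _⟩ ⟨N, _⟩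
    funext i
    fin_cases i <;> simp [coordFun, SetLike.val_smul, Matrix.smul_apply] <;> ring
  map_smul' := by
    rintro r x
    have h : ((r • x : ↥(gA A)) : Matrix (Fin 3) (Fin 3) ℝ) = r • (x : Matrix (Fin 3) (Fin 3) ℝ) := rfl
    funext i
    fin_cases i <;> simp [coordFun, h, Matrix.smul_apply, smul_eq_mul] <;> ring



noncomputable def gABasis (hA : A 1 0 ≠ 0) : Module.Basis (Fin 3) ℝ ↥(gA A) :=
  Module.Basis.ofEquivFun (gAEquiv A hA)

lemma bracket_Lmem (v w : Fin 3 → ℝ) :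
    ⁅Lmem A v, Lmem A w⁆ = Lmem A
      ![0, A 0 0 * (v 0 * w 1 - w 0 * v 1) + A 0 1 * (v 0 * w 2 - w 0 * v 2),
        A 1 0 * (v 0 * w 1 - w 0 * v 1) + A 1 1 * (v 0 * w 2 - w 0 * v 2)] := by
  apply Subtype.ext
  rw [LieSubalgebra.coe_bracket]
  show (Lmem A v : Matrix (Fin 3) (Fin 3) ℝ) * (Lmem A w) - (Lmem A w : Matrix (Fin 3) (Fin 3) ℝ) * (Lmem A v) = _
  simp only [Lmem_coe]
  rw [Lmat, Lmat, Matrix.mul_fin_three, Matrix.mul_fin_three]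
  ext i j
  fin_cases i <;> fin_cases j <;>
    simp [Lmat, Matrix.vecHead, Matrix.vecTail] <;> ring

lemma toMatrix_ad (hA : A 1 0 ≠ 0) (v : Fin 3 → ℝ) :
    LinearMap.toMatrix (gABasis A hA) (gABasis A hA)
      ((LieAlgebra.ad ℝ ↥(gA A)) (Lmem A v)) =
    !![0, 0, 0;
       -(A 0 0 * v 1 + A 0 1 * v 2), v 0 * A 0 0, v 0 * A 0 1;
       -(A 1 0 * v 1 + A 1 1 * v 2), v 0 * A 1 0, v 0 * A 1 1] := by
  ext i j
  rw [LinearMap.toMatrix_apply, LieAlgebra.ad_apply]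
  have hb : (gABasis A hA) j = Lmem A (Pi.single j 1) := by
    simp [gABasis, Module.Basis.coe_ofEquivFun]; rfl
  rw [hb, bracket_Lmem]
  have hr : ∀ x, ((gABasis A hA).repr x) i = gAEquiv A hA x i :=
    fun x => Module.Basis.ofEquivFun_repr_apply _ _ _
  rw [hr]
  show coordFun A (Lmat A _ _ _) i = _
  rw [coord_Lmat A hA]
  fin_cases i <;> fin_cases j <;>
    simp [Pi.single_apply] <;> ring

lemma trace_ad (hA : A 1 0 ≠ 0) (v : Fin 3 → ℝ) :
    LinearMap.trace ℝ ↥(gA A) ((LieAlgebra.ad ℝ ↥(gA A)) (Lmem A v)) =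
      (A 0 0 + A 1 1) * v 0 := by
  rw [LinearMap.trace_eq_matrix_trace ℝ (gABasis A hA), toMatrix_ad A hA,
    Matrix.trace_fin_three]
  simp; ring

lemma trace_ad_sq (hA : A 1 0 ≠ 0) (v : Fin 3 → ℝ) :
    LinearMap.trace ℝ ↥(gA A)
      (((LieAlgebra.ad ℝ ↥(gA A)) (Lmem A v)) ∘ₗ ((LieAlgebra.ad ℝ ↥(gA A)) (Lmem A v))) =
      (A 0 0 ^ 2 + 2 * A 0 1 * A 1 0 + A 1 1 ^ 2) * v 0 ^ 2 := by
  rw [LinearMap.trace_eq_matrix_trace ℝ (gABasis A hA),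
    LinearMap.toMatrix_comp _ (gABasis A hA) _, toMatrix_ad A hA,
    Matrix.mul_fin_three, Matrix.trace_fin_three]
  simp [Matrix.vecHead, Matrix.vecTail]; ring


lemma gAEquiv_Lmem (hA : A 1 0 ≠ 0) (v : Fin 3 → ℝ) :
    gAEquiv A hA (Lmem A v) = v := by
  show coordFun A (Lmat A (v 0) (v 1) (v 2)) = v
  rw [coord_Lmat A hA]
  funext i; fin_cases i <;> rfl

lemma gAEquiv_symm_apply (hA : A 1 0 ≠ 0) (v : Fin 3 → ℝ) :
    (gAEquiv A hA).symm v = Lmem A v :=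
  ((gAEquiv A hA).symm_apply_eq).mpr (gAEquiv_Lmem A hA v).symm

lemma exists_Lmem (x : ↥(gA A)) : ∃ v : Fin 3 → ℝ, x = Lmem A v := by
  obtain ⟨M, x₁, x₂, x₃, rfl⟩ := x
  refine ⟨![x₁, x₂, x₃], ?_⟩
  apply Subtype.ext
  rfl

end GAaux

section Invariance
variable {L₁ L₂ : Type*} [LieRing L₁] [LieAlgebra ℝ L₁] [LieRing L₂] [LieAlgebra ℝ L₂]

lemma ad_lieEquiv (e : L₁ ≃ₗ⁅ℝ⁆ L₂) (x : L₁) :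
    (LieAlgebra.ad ℝ L₂) (e x) = (e.toLinearEquiv).conj ((LieAlgebra.ad ℝ L₁) x) := by
  ext y
  rw [LinearEquiv.conj_apply]
  simp only [LinearMap.comp_apply, LieAlgebra.ad_apply]
  show ⁅e x, y⁆ = e ⁅x, e.symm y⁆
  rw [e.map_lie, e.apply_symm_apply]

lemma trace_ad_lieEquiv (e : L₁ ≃ₗ⁅ℝ⁆ L₂) (x : L₁) :
    LinearMap.trace ℝ L₂ ((LieAlgebra.ad ℝ L₂) (e x)) =
      LinearMap.trace ℝ L₁ ((LieAlgebra.ad ℝ L₁) x) := by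
  rw [ad_lieEquiv, LinearMap.trace_conj']

lemma trace_ad_sq_lieEquiv (e : L₁ ≃ₗ⁅ℝ⁆ L₂) (x : L₁) :
    LinearMap.trace ℝ L₂ ((LieAlgebra.ad ℝ L₂) (e x) ∘ₗ (LieAlgebra.ad ℝ L₂) (e x)) =
      LinearMap.trace ℝ L₁ ((LieAlgebra.ad ℝ L₁) x ∘ₗ (LieAlgebra.ad ℝ L₁) x) := by
  rw [ad_lieEquiv]
  have : (e.toLinearEquiv).conj ((LieAlgebra.ad ℝ L₁) x) ∘ₗ
      (e.toLinearEquiv).conj ((LieAlgebra.ad ℝ L₁) x) =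
      (e.toLinearEquiv).conj ((LieAlgebra.ad ℝ L₁) x ∘ₗ (LieAlgebra.ad ℝ L₁) x) := by
    ext y
    simp only [LinearEquiv.conj_apply, LinearMap.comp_apply]
    show e ⁅x, e.symm (e ⁅x, e.symm y⁆)⁆ = e ⁅x, ⁅x, e.symm y⁆⁆
    rw [e.symm_apply_apply]
  rw [this, LinearMap.trace_conj']

end Invariance

noncomputable def diagEquiv (t r : ℝ) (ht : t ≠ 0) (hr : r ≠ 0) :
    (Fin 3 → ℝ) ≃ₗ[ℝ] (Fin 3 → ℝ) where
  toFun v := ![t * v 0, v 1, r * v 2]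
  invFun v := ![v 0 / t, v 1, v 2 / r]
  left_inv v := by
    funext i
    fin_cases i <;> simp <;> field_simp
  right_inv v := by
    funext i
    fin_cases i <;> simp <;> field_simp
  map_add' v w := by
    funext i
    fin_cases i <;> simp <;> ring
  map_smul' s v := by
    funext i
    fin_cases i <;> simp <;> ring

set_option maxHeartbeats 1000000 in
open GAaux in
/-- For `aᵢ > 0`, `bᵢ > 0`, `cᵢ ∈ ℝ` and `Aᵢ = [[aᵢ,cᵢ],[bᵢ,aᵢ]]`, the Lie algebras
`𝔤(A₁)` and `𝔤(A₂)` are isomorphic if and only if `b₁c₁/a₁² = b₂c₂/a₂²`. -/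
theorem gA_isomorphic_iff (a₁ b₁ c₁ a₂ b₂ c₂ : ℝ)
    (ha₁ : 0 < a₁) (hb₁ : 0 < b₁) (ha₂ : 0 < a₂) (hb₂ : 0 < b₂) :
    Nonempty (gA !![a₁, c₁; b₁, a₁] ≃ₗ⁅ℝ⁆ gA !![a₂, c₂; b₂, a₂]) ↔
      b₁ * c₁ / a₁ ^ 2 = b₂ * c₂ / a₂ ^ 2 := by
  have ha₁' := ha₁.ne'
  have hb₁' := hb₁.ne'
  have ha₂' := ha₂.ne'
  have hb₂' := hb₂.ne'
  set A₁ := !![a₁, c₁; b₁, a₁] with hA₁def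
  set A₂ := !![a₂, c₂; b₂, a₂] with hA₂def
  have h₁ : A₁ 1 0 ≠ 0 := by simp [hA₁def, hb₁']
  have h₂ : A₂ 1 0 ≠ 0 := by simp [hA₂def, hb₂']
  have eA₁ : A₁ 0 0 = a₁ ∧ A₁ 0 1 = c₁ ∧ A₁ 1 0 = b₁ ∧ A₁ 1 1 = a₁ := by
    refine ⟨?_, ?_, ?_, ?_⟩ <;> simp [hA₁def]
  have eA₂ : A₂ 0 0 = a₂ ∧ A₂ 0 1 = c₂ ∧ A₂ 1 0 = b₂ ∧ A₂ 1 1 = a₂ := by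
    refine ⟨?_, ?_, ?_, ?_⟩ <;> simp [hA₂def]
  constructor
  · rintro ⟨e⟩
    set x : ↥(gA A₁) := Lmem A₁ ![1, 0, 0] with hxdef
    obtain ⟨w, hw⟩ := exists_Lmem A₂ (e x)
    have T1 := trace_ad_lieEquiv e x
    have T2 := trace_ad_sq_lieEquiv e x
    rw [hw, trace_ad A₂ h₂, trace_ad A₁ h₁] at T1
    rw [hw, trace_ad_sq A₂ h₂, trace_ad_sq A₁ h₁] at T2
    rw [eA₁.1, eA₁.2.2.2, eA₂.1, eA₂.2.2.2] at T1
    rw [eA₁.1, eA₁.2.1, eA₁.2.2.1, eA₁.2.2.2, eA₂.1, eA₂.2.1, eA₂.2.2.1, eA₂.2.2.2] at T2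
    simp only [Matrix.cons_val_zero] at T1 T2
    have hw0 : w 0 = a₁ / a₂ := by
      field_simp
      linarith
    rw [hw0] at T2
    field_simp at T2 ⊢
    nlinarith [T2, sq_nonneg a₁, sq_nonneg a₂]
  · intro hk
    have h : b₁ * c₁ * a₂ ^ 2 = b₂ * c₂ * a₁ ^ 2 := by
      field_simp at hk
      linarith
    obtain ⟨t, htdef⟩ : ∃ t : ℝ, t = a₁ / a₂ := ⟨_, rfl⟩
    obtain ⟨r, hrdef⟩ : ∃ r : ℝ, r = a₁ * b₂ / (b₁ * a₂) := ⟨_, rfl⟩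
    have ht : t ≠ 0 := by rw [htdef]; positivity
    have hr : r ≠ 0 := by rw [hrdef]; positivity
    have hat : a₂ * t = a₁ := by rw [htdef]; field_simp
    have hct : c₂ * (t * r) = c₁ := by
      rw [htdef, hrdef]
      field_simp
      linear_combination -h
    have hbt : r * b₁ = b₂ * t := by
      rw [htdef, hrdef]
      field_simp
    set D : (Fin 3 → ℝ) ≃ₗ[ℝ] (Fin 3 → ℝ) := diagEquiv t r ht hr with hDdef
    set E : ↥(gA A₁) ≃ₗ[ℝ] ↥(gA A₂) :=
      (gAEquiv A₁ h₁).trans (D.trans (gAEquiv A₂ h₂).symm) with hEdef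
    have hE : ∀ v : Fin 3 → ℝ, E (Lmem A₁ v) = Lmem A₂ ![t * v 0, v 1, r * v 2] := by
      intro v
      rw [hEdef]
      simp only [LinearEquiv.trans_apply]
      rw [gAEquiv_Lmem A₁ h₁]
      rw [show D v = ![t * v 0, v 1, r * v 2] from rfl]
      rw [gAEquiv_symm_apply A₂ h₂]
    refine ⟨⟨⟨(E : ↥(gA A₁) →ₗ[ℝ] ↥(gA A₂)), ?_⟩, E.symm, E.left_inv, E.right_inv⟩⟩
    intro x y
    obtain ⟨v, rfl⟩ := exists_Lmem A₁ x
    obtain ⟨u, rfl⟩ := exists_Lmem A₁ y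
    show E ⁅Lmem A₁ v, Lmem A₁ u⁆ = ⁅E (Lmem A₁ v), E (Lmem A₁ u)⁆
    rw [bracket_Lmem, hE, hE, hE, bracket_Lmem]
    congr 1
    funext i
    rw [eA₁.1, eA₁.2.1, eA₁.2.2.1, eA₁.2.2.2, eA₂.1, eA₂.2.1, eA₂.2.2.1, eA₂.2.2.2]
    fin_cases i <;> simp
    · linear_combination (-(v 0 * u 1 - u 0 * v 1)) * hat - (v 0 * u 2 - u 0 * v 2) * hct
    · linear_combination (v 0 * u 1 - u 0 * v 1) * hbt - (r * (v 0 * u 2 - u 0 * v 2)) * hat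
end

section
/- Let a, b, c be real numbers with a ≥ 0 and b ≥ |c|, and define R₁₁ = −2a² − (b+c)²/2, R₂₂ = −2a² − ((b+c)/2)·√(4a² + (b−c)²), R₃₃ = −2a² + ((b+c)/2)·√(4a² + (b−c)²). Then: (i) if b + c = 0 then R₁₁ = R₂₂ = R₃₃ = −2a²; (ii) if b + c ≠ 0 then R₁₁ = R₂₂ if and only if a² = bc; (iii) if b + c ≠ 0 then R₂₂ = R₃₃ if and only if a = 0 and b = c; (iv) if b + c ≠ 0 then R₁₁ ≠ R₃₃. -/
/-- Coincidences among the diagonal entries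
`R₁₁ = −2a² − (b+c)²/2`, `R₂₂ = −2a² − ((b+c)/2)√(4a²+(b−c)²)`,
`R₃₃ = −2a² + ((b+c)/2)√(4a²+(b−c)²)` of the diagonalized Ricci matrix. -/
theorem ricci_diagonal_entries (a b c : ℝ) (ha : 0 ≤ a) (hbc : |c| ≤ b) :
    ((b + c = 0 →
        -2 * a ^ 2 - (b + c) ^ 2 / 2 = -2 * a ^ 2 ∧
        -2 * a ^ 2 - (b + c) / 2 * Real.sqrt (4 * a ^ 2 + (b - c) ^ 2) = -2 * a ^ 2 ∧
        -2 * a ^ 2 + (b + c) / 2 * Real.sqrt (4 * a ^ 2 + (b - c) ^ 2) = -2 * a ^ 2) ∧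
     (b + c ≠ 0 →
        (-2 * a ^ 2 - (b + c) ^ 2 / 2 =
            -2 * a ^ 2 - (b + c) / 2 * Real.sqrt (4 * a ^ 2 + (b - c) ^ 2) ↔
          a ^ 2 = b * c)) ∧
     (b + c ≠ 0 →
        (-2 * a ^ 2 - (b + c) / 2 * Real.sqrt (4 * a ^ 2 + (b - c) ^ 2) =
            -2 * a ^ 2 + (b + c) / 2 * Real.sqrt (4 * a ^ 2 + (b - c) ^ 2) ↔
          a = 0 ∧ b = c)) ∧
     (b + c ≠ 0 →
        -2 * a ^ 2 - (b + c) ^ 2 / 2 ≠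
          -2 * a ^ 2 + (b + c) / 2 * Real.sqrt (4 * a ^ 2 + (b - c) ^ 2))) := by
  have hbc0 : 0 ≤ b + c := by
    have := neg_abs_le c
    linarith
  set s := Real.sqrt (4 * a ^ 2 + (b - c) ^ 2) with hs
  have hs0 : 0 ≤ s := Real.sqrt_nonneg _
  have hs2 : s ^ 2 = 4 * a ^ 2 + (b - c) ^ 2 := by
    rw [hs, Real.sq_sqrt]; positivity
  refine ⟨fun h => by rw [h]; norm_num, fun h => ?_, fun h => ?_, fun h => ?_⟩
  · have hpos : 0 < b + c := lt_of_le_of_ne hbc0 (Ne.symm h)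
    constructor
    · intro heq
      have h1 : b + c = s := by
        have := mul_left_cancel₀ (ne_of_gt (by linarith : (0:ℝ) < (b + c) / 2))
          (by linarith [heq] : (b + c) / 2 * (b + c) = (b + c) / 2 * s)
        exact this
      have : (b + c) ^ 2 = s ^ 2 := by rw [h1]
      nlinarith [hs2]
    · intro heq
      have h1 : (b + c) ^ 2 = s ^ 2 := by nlinarith [hs2]
      have h2 : b + c = s := by
        nlinarith [hpos, hs0]
      nlinarith [h2]
  · have hpos : 0 < b + c := lt_of_le_of_ne hbc0 (Ne.symm h)
    constructor
    · intro heq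
      have h1 : s = 0 := by
        have : (b + c) * s = 0 := by linarith
        rcases mul_eq_zero.mp this with h' | h'
        · exact absurd h' (ne_of_gt hpos)
        · exact h'
      have h2 : 4 * a ^ 2 + (b - c) ^ 2 = 0 := by
        rw [← hs2, h1]; ring
      constructor
      · nlinarith
      · nlinarith
    · rintro ⟨rfl, rfl⟩
      simp [hs]
  · have hpos : 0 < b + c := lt_of_le_of_ne hbc0 (Ne.symm h)
    intro heq
    nlinarith [mul_nonneg (le_of_lt hpos) hs0]
end
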